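/- arXiv:2009.06966 — 4 statements merged into one kernel-verified Lean document; each statement's English description precedes it below -/
import Mathlib

section
/- Let K_O be a t×t real symmetric positive semidefinite matrix with all diagonal entries at most δ, let K_P be a t×t real symmetric positive semidefinite matrix, and let τ > 0. Then log det(I_t + (1/τ)(I_t + (1/τ)K_P)^{-1} K_O) ≤ t·δ/τ. -/
open Matrix

/-- Trace of a real hermitian matrix is the sum of its eigenvalues. -/
lemma trace_eq_sum_eigenvalues' {t : ℕ} {A : Matrix (Fin t) (Fin t) ℝ}
    (hA : A.IsHermitian) : A.trace = ∑ i, hA.eigenvalues i := by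
  conv_lhs => rw [hA.spectral_theorem]
  rw [Unitary.conjStarAlgAut_apply]
  rw [Matrix.trace_mul_cycle]
  rw [show (star (hA.eigenvectorUnitary : Matrix (Fin t) (Fin t) ℝ)) *
      (hA.eigenvectorUnitary : Matrix (Fin t) (Fin t) ℝ) = 1 from
    Unitary.coe_star_mul_self _, one_mul, Matrix.trace_diagonal]
  simp [RCLike.ofReal]

/-- A real positive semidefinite matrix has nonnegative trace. -/
lemma trace_nonneg_of_posSemidef {t : ℕ} {A : Matrix (Fin t) (Fin t) ℝ}
    (hA : A.PosSemidef) : 0 ≤ A.trace := by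
  rw [trace_eq_sum_eigenvalues' hA.1]
  exact Finset.sum_nonneg fun i _ => hA.eigenvalues_nonneg i

open scoped MatrixOrder in
lemma exists_sqrt_psd {t : ℕ} {A : Matrix (Fin t) (Fin t) ℝ} (hA : A.PosSemidef) :
    ∃ S : Matrix (Fin t) (Fin t) ℝ, S.PosSemidef ∧ S * S = A :=
  ⟨CFC.sqrt A, (CFC.sqrt_nonneg A).posSemidef, CFC.sqrt_mul_sqrt_self A hA.nonneg⟩

/-- Trace of a product of two real psd matrices is nonnegative. -/
lemma trace_mul_nonneg_of_posSemidef {t : ℕ} {A B : Matrix (Fin t) (Fin t) ℝ}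
    (hA : A.PosSemidef) (hB : B.PosSemidef) : 0 ≤ (A * B).trace := by
  obtain ⟨S, hS, hSS⟩ := exists_sqrt_psd hA
  have h1 : A * B = S * (S * B) := by
    rw [← Matrix.mul_assoc, hSS]
  rw [h1, Matrix.trace_mul_comm, Matrix.mul_assoc]
  have : (Sᴴ * B * S).PosSemidef := hB.conjTranspose_mul_mul_same _
  rw [hS.1] at this
  rw [← Matrix.mul_assoc]
  exact trace_nonneg_of_posSemidef this

/-- `log det (1 + N) ≤ trace N` for a real psd matrix `N`. -/
lemma log_det_one_add_le_trace {t : ℕ} {N : Matrix (Fin t) (Fin t) ℝ}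
    (hN : N.PosSemidef) : Real.log (1 + N).det ≤ N.trace := by
  have hM : (1 + N).PosDef := Matrix.PosDef.add_posSemidef Matrix.PosDef.one hN
  have hdet : (1 + N).det = ∏ i, hM.1.eigenvalues i := by
    simpa using hM.1.det_eq_prod_eigenvalues
  have hpos : ∀ i, 0 < hM.1.eigenvalues i := hM.eigenvalues_pos
  rw [hdet, Real.log_prod (fun i _ => (hpos i).ne')]
  have h1 : ∑ i, Real.log (hM.1.eigenvalues i) ≤ ∑ i, (hM.1.eigenvalues i - 1) :=
    Finset.sum_le_sum fun i _ => Real.log_le_sub_one_of_pos (hpos i)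
  refine h1.trans ?_
  have h2 : (1 + N).trace = ∑ i, hM.1.eigenvalues i := trace_eq_sum_eigenvalues' hM.1
  have h3 : (1 + N).trace = t + N.trace := by
    rw [Matrix.trace_add, Matrix.trace_one]; simp
  rw [Finset.sum_sub_distrib]
  simp only [Finset.sum_const, Finset.card_univ, Fintype.card_fin, nsmul_eq_mul, mul_one]
  rw [← h2, h3]
  ring_nf
  exact le_refl _

theorem logdet_residual_bound {t : ℕ} (K_P K_O : Matrix (Fin t) (Fin t) ℝ)
    (hP : K_P.PosSemidef) (hO : K_O.PosSemidef) {δ τ : ℝ}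
    (hdiag : ∀ i, K_O i i ≤ δ) (hτ : 0 < τ) :
    Real.log ((1 + τ⁻¹ • ((1 + τ⁻¹ • K_P)⁻¹ * K_O)).det) ≤ t * δ / τ := by
  have hτinv : (0:ℝ) ≤ τ⁻¹ := le_of_lt (inv_pos.mpr hτ)
  -- psd of scalar multiples
  have smul_psd : ∀ {M : Matrix (Fin t) (Fin t) ℝ}, M.PosSemidef → (τ⁻¹ • M).PosSemidef := by
    intro M hM
    refine ⟨?_, fun x => ?_⟩
    · unfold Matrix.IsHermitian
      rw [Matrix.conjTranspose_smul, hM.1]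
      simp
    · exact (hM.smul hτinv).2 x
  set P : Matrix (Fin t) (Fin t) ℝ := τ⁻¹ • K_P with hPdef
  set C : Matrix (Fin t) (Fin t) ℝ := τ⁻¹ • K_O with hCdef
  have hPsd : P.PosSemidef := smul_psd hP
  have hCsd : C.PosSemidef := smul_psd hO
  set A : Matrix (Fin t) (Fin t) ℝ := 1 + P with hAdef
  have hA : A.PosDef := Matrix.PosDef.add_posSemidef Matrix.PosDef.one hPsd
  have hAdet : IsUnit A.det := by
    rw [isUnit_iff_ne_zero]
    exact ne_of_gt hA.det_pos
  have hAinv : A⁻¹.PosDef := hA.inv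
  -- rewrite the matrix inside det
  have hrw : τ⁻¹ • (A⁻¹ * K_O) = A⁻¹ * C := by
    rw [hCdef, Matrix.mul_smul]
  -- sqrt of C
  obtain ⟨S, hSpsd, hSS⟩ := exists_sqrt_psd hCsd
  -- N := S * A⁻¹ * S is psd
  set N : Matrix (Fin t) (Fin t) ℝ := S * A⁻¹ * S with hNdef
  have hNpsd : N.PosSemidef := by
    have := hAinv.posSemidef.conjTranspose_mul_mul_same S
    rwa [hSpsd.1] at this
  -- determinant equality
  have hdet_eq : (1 + A⁻¹ * C).det = (1 + N).det := by
    have h1 : A⁻¹ * C = (A⁻¹ * S) * S := by rw [Matrix.mul_assoc, hSS]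
    have h2 : 1 + (A⁻¹ * S) * S = (A⁻¹ * S) * S + 1 := add_comm _ _
    have h3 : 1 + S * (A⁻¹ * S) = S * (A⁻¹ * S) + 1 := add_comm _ _
    rw [h1, h2, Matrix.det_mul_add_one_comm, ← h3, hNdef, Matrix.mul_assoc]
  -- trace of N equals trace of A⁻¹ * C
  have htrN : N.trace = (A⁻¹ * C).trace := by
    rw [hNdef, Matrix.trace_mul_cycle, hSS, Matrix.trace_mul_comm]
  -- 1 - A⁻¹ is psd
  have hkey : 1 - A⁻¹ = A⁻¹ * P := by
    have h1 : A * (1 - A⁻¹) = P := by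
      rw [Matrix.mul_sub, Matrix.mul_one, Matrix.mul_nonsing_inv _ hAdet, hAdef]
      abel
    calc 1 - A⁻¹ = A⁻¹ * (A * (1 - A⁻¹)) := by
            rw [← Matrix.mul_assoc, Matrix.nonsing_inv_mul _ hAdet, Matrix.one_mul]
      _ = A⁻¹ * P := by rw [h1]
  have hsub_psd : (1 - A⁻¹).PosSemidef := by
    have hPP : (P + P * P).PosSemidef := by
      refine hPsd.add ?_
      have := Matrix.posSemidef_conjTranspose_mul_self P
      rwa [hPsd.1] at this
    have hcong : ((A⁻¹)ᴴ * (P + P * P) * A⁻¹).PosSemidef :=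
      hPP.conjTranspose_mul_mul_same _
    rw [hAinv.isHermitian] at hcong
    have heq : A⁻¹ * (P + P * P) * A⁻¹ = A⁻¹ * P := by
      have h4 : (P + P * P) * A⁻¹ = P := by
        have : P + P * P = P * A := by rw [hAdef, Matrix.mul_add, Matrix.mul_one]
        rw [this, Matrix.mul_assoc, Matrix.mul_nonsing_inv _ hAdet, Matrix.mul_one]
      rw [Matrix.mul_assoc, h4]
    rw [heq] at hcong
    rwa [hkey]
  -- trace (A⁻¹ * C) ≤ trace C
  have htr_le : (A⁻¹ * C).trace ≤ C.trace := by
    have h0 : 0 ≤ ((1 - A⁻¹) * C).trace := trace_mul_nonneg_of_posSemidef hsub_psd hCsd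
    have h1 : (1 - A⁻¹) * C = C - A⁻¹ * C := by
      rw [Matrix.sub_mul, Matrix.one_mul]
    rw [h1, Matrix.trace_sub] at h0
    linarith
  -- trace C ≤ t * δ / τ
  have htrC : C.trace ≤ t * δ / τ := by
    have h1 : C.trace = τ⁻¹ * K_O.trace := by
      rw [hCdef, Matrix.trace_smul]; simp
    have h2 : K_O.trace ≤ t * δ := by
      have : K_O.trace = ∑ i, K_O i i := rfl
      rw [this]
      calc ∑ i : Fin t, K_O i i ≤ ∑ _i : Fin t, δ := Finset.sum_le_sum fun i _ => hdiag i
        _ = t * δ := by simp [mul_comm]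
    rw [h1, div_eq_inv_mul]
    exact mul_le_mul_of_nonneg_left h2 hτinv
  calc Real.log ((1 + τ⁻¹ • (A⁻¹ * K_O)).det)
      = Real.log ((1 + N).det) := by rw [hrw, hdet_eq]
    _ ≤ N.trace := log_det_one_add_le_trace hNpsd
    _ = (A⁻¹ * C).trace := htrN
    _ ≤ C.trace := htr_le
    _ ≤ t * δ / τ := htrC
end

section
/- Let K be a t×t real symmetric positive semidefinite matrix that decomposes as K = K_P + K_O, where K_P = A Aᵀ for some t×D matrix A whose rows a_s satisfy ‖a_s‖₂² ≤ k̄, and K_O is positive semidefinite with all diagonal entries at most δ. Then for any τ > 0, (1/2) log det(I_t + (1/τ)K) ≤ (1/2) D log(1 + t·k̄/(τ·D)) + (1/2) t·δ/τ. -/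
open Matrix Finset

section Helpers

variable {n : ℕ}

/-- det (1 + M) as a product over eigenvalues, for Hermitian real M. -/
lemma det_one_add_eq_prod {M : Matrix (Fin n) (Fin n) ℝ} (hM : M.IsHermitian) :
    (1 + M).det = ∏ i, (1 + hM.eigenvalues i) := by
  have hU : (hM.eigenvectorUnitary : Matrix (Fin n) (Fin n) ℝ) *
      star (hM.eigenvectorUnitary : Matrix (Fin n) (Fin n) ℝ) = 1 :=
    (Matrix.mem_unitaryGroup_iff).mp hM.eigenvectorUnitary.2
  have key : (1 + M : Matrix (Fin n) (Fin n) ℝ) =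
      (hM.eigenvectorUnitary : Matrix (Fin n) (Fin n) ℝ) *
        (1 + diagonal (RCLike.ofReal ∘ hM.eigenvalues)) *
        star (hM.eigenvectorUnitary : Matrix (Fin n) (Fin n) ℝ) := by
    rw [mul_add, mul_one, add_mul, hU, ← Unitary.conjStarAlgAut_apply (S := ℝ), ← hM.spectral_theorem]
  rw [key, det_mul, det_mul, mul_right_comm, ← det_mul, hU, det_one, one_mul]
  have h1 : ((1 : Matrix (Fin n) (Fin n) ℝ) + diagonal (RCLike.ofReal ∘ hM.eigenvalues))
      = diagonal (fun i => 1 + hM.eigenvalues i) := by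
    rw [← diagonal_one, diagonal_add]
    rfl
  rw [h1, det_diagonal]

lemma one_le_det_one_add {M : Matrix (Fin n) (Fin n) ℝ} (hM : M.PosSemidef) :
    1 ≤ (1 + M).det := by
  rw [det_one_add_eq_prod hM.1]
  calc (1:ℝ) = ∏ _i : Fin n, 1 := by simp
  _ ≤ ∏ i, (1 + hM.1.eigenvalues i) := by
      apply Finset.prod_le_prod
      · intro i _; norm_num
      · intro i _; linarith [hM.eigenvalues_nonneg i]

lemma trace_eq_sum_eig {M : Matrix (Fin n) (Fin n) ℝ} (hM : M.IsHermitian) :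
    M.trace = ∑ i, hM.eigenvalues i := by
  have hU : star (hM.eigenvectorUnitary : Matrix (Fin n) (Fin n) ℝ) *
      (hM.eigenvectorUnitary : Matrix (Fin n) (Fin n) ℝ) = 1 :=
    (Matrix.mem_unitaryGroup_iff').mp hM.eigenvectorUnitary.2
  conv_lhs => rw [hM.spectral_theorem]
  rw [Unitary.conjStarAlgAut_apply, Matrix.trace_mul_cycle, hU, one_mul, trace_diagonal]
  rfl

lemma smul_posSemidef {M : Matrix (Fin n) (Fin n) ℝ} (hM : M.PosSemidef) {c : ℝ}
    (hc : 0 ≤ c) : (c • M).PosSemidef := by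
  refine Matrix.PosSemidef.of_dotProduct_mulVec_nonneg ?_ fun x => ?_
  · unfold Matrix.IsHermitian
    rw [conjTranspose_smul, hM.1]
    simp
  · rw [smul_mulVec, dotProduct_smul]
    exact mul_nonneg hc (hM.dotProduct_mulVec_nonneg x)

/-- log det (1+M) ≤ trace M for PSD M. -/
lemma log_det_one_add_le_trace_s8 {M : Matrix (Fin n) (Fin n) ℝ} (hM : M.PosSemidef) :
    Real.log (1 + M).det ≤ M.trace := by
  rw [det_one_add_eq_prod hM.1, trace_eq_sum_eig hM.1]
  rw [Real.log_prod]
  · apply Finset.sum_le_sum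
    intro i _
    have h := hM.eigenvalues_nonneg i
    have := Real.log_le_sub_one_of_pos (x := 1 + hM.1.eigenvalues i) (by linarith)
    linarith
  · intro i _
    have := hM.eigenvalues_nonneg i
    positivity

open scoped MatrixOrder in
/-- det monotone: det P ≤ det (P + Q) for P PD, Q PSD. -/
lemma det_le_det_add {P Q : Matrix (Fin n) (Fin n) ℝ} (hP : P.PosDef) (hQ : Q.PosSemidef) :
    P.det ≤ (P + Q).det := by
  haveI := P.invertibleOfIsUnitDet hP.det_pos.ne'.isUnit
  set S := CFC.sqrt Q with hS
  have hSS : S * S = Q := CFC.sqrt_mul_sqrt_self Q hQ.nonneg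
  have key : P + Q = P * (1 + P⁻¹ * Q) := by
    rw [mul_add, mul_one, ← mul_assoc, Matrix.mul_nonsing_inv _ hP.det_pos.ne'.isUnit, one_mul]
  rw [key, det_mul]
  have h2 : (1 + P⁻¹ * Q).det = (1 + S * (P⁻¹ * S)).det := by
    rw [← hSS, ← mul_assoc, Matrix.det_one_add_mul_comm]
  have hPSD : (S * (P⁻¹ * S)).PosSemidef := by
    have := hP.inv.posSemidef.mul_mul_conjTranspose_same S
    rwa [(CFC.sqrt_nonneg Q).posSemidef.1, mul_assoc] at this
  have := one_le_det_one_add hPSD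
  nlinarith [hP.det_pos, h2 ▸ this]

/-- 1 - (1+M)⁻¹ is PSD for PSD M. -/
lemma one_sub_inv_posSemidef {M : Matrix (Fin n) (Fin n) ℝ} (hM : M.PosSemidef) :
    ((1 : Matrix (Fin n) (Fin n) ℝ) - (1 + M)⁻¹).PosSemidef := by
  have hPD : (1 + M : Matrix (Fin n) (Fin n) ℝ).PosDef := Matrix.PosDef.one.add_posSemidef hM
  have hu : IsUnit (1 + M : Matrix (Fin n) (Fin n) ℝ).det := hPD.det_pos.ne'.isUnit
  have hinv : ((1 + M)⁻¹ : Matrix (Fin n) (Fin n) ℝ) * (1 + M) = 1 :=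
    Matrix.nonsing_inv_mul _ hu
  have hinv' : ((1 + M) : Matrix (Fin n) (Fin n) ℝ) * (1 + M)⁻¹ = 1 :=
    Matrix.mul_nonsing_inv _ hu
  have e1 : (1 : Matrix (Fin n) (Fin n) ℝ) - (1 + M)⁻¹ = (1 + M)⁻¹ * M := by
    have h := hinv
    rw [mul_add, mul_one] at h
    rw [sub_eq_iff_eq_add]
    exact h.symm.trans (add_comm _ _)
  have e2 : ((1 + M)⁻¹ : Matrix (Fin n) (Fin n) ℝ) * (M + M * M) * (1 + M)⁻¹
      = (1 + M)⁻¹ * M := by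
    have h1 : M + M * M = M * (1 + M) := by rw [mul_add, mul_one]
    rw [h1, ← Matrix.mul_assoc, Matrix.mul_assoc ((1 + M)⁻¹ * M), hinv', mul_one]
  rw [e1, ← e2]
  have hC : (M + M * M).PosSemidef := by
    have h2 : (M * M).PosSemidef := by
      have := Matrix.posSemidef_self_mul_conjTranspose M
      rwa [hM.1] at this
    exact hM.add h2
  have := hC.mul_mul_conjTranspose_same ((1 + M)⁻¹)
  rwa [show ((1 + M)⁻¹ : Matrix (Fin n) (Fin n) ℝ)ᴴ = (1 + M)⁻¹ by
    rw [Matrix.conjTranspose_nonsing_inv, hPD.isHermitian.eq]] at this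

open scoped MatrixOrder in
/-- det (1 + (M + N)) ≤ det(1+M) * det(1+N) for PSD M, N. -/
lemma det_one_add_add_le {M N : Matrix (Fin n) (Fin n) ℝ} (hM : M.PosSemidef)
    (hN : N.PosSemidef) : (1 + (M + N)).det ≤ (1 + M).det * (1 + N).det := by
  have hPD : (1 + M : Matrix (Fin n) (Fin n) ℝ).PosDef := Matrix.PosDef.one.add_posSemidef hM
  have hu : IsUnit (1 + M : Matrix (Fin n) (Fin n) ℝ).det := hPD.det_pos.ne'.isUnit
  set S := CFC.sqrt N with hS
  have hSS : S * S = N := CFC.sqrt_mul_sqrt_self N hN.nonneg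
  have hSh : Sᴴ = S := (CFC.sqrt_nonneg N).posSemidef.1
  have key : 1 + (M + N) = (1 + M) * (1 + (1 + M)⁻¹ * N) := by
    rw [mul_add, mul_one, ← mul_assoc, Matrix.mul_nonsing_inv _ hu, one_mul, add_assoc]
  rw [key, det_mul]
  have h2 : (1 + (1 + M)⁻¹ * N).det = (1 + S * ((1 + M)⁻¹ * S)).det := by
    rw [← hSS, ← mul_assoc, Matrix.det_one_add_mul_comm]
  have hR : (S * ((1 + M)⁻¹ * S)).PosSemidef := by
    have := hPD.inv.posSemidef.mul_mul_conjTranspose_same S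
    rwa [hSh, mul_assoc] at this
  -- N - S (1+M)⁻¹ S is PSD
  have hdiff : (N - S * ((1 + M)⁻¹ * S)).PosSemidef := by
    have h3 := (one_sub_inv_posSemidef hM).mul_mul_conjTranspose_same S
    rwa [hSh, Matrix.mul_sub, mul_one, Matrix.sub_mul, Matrix.mul_assoc, hSS] at h3
  have h4 : (1 + S * ((1 + M)⁻¹ * S)).det ≤ (1 + N).det := by
    have := det_le_det_add (Matrix.PosDef.one.add_posSemidef hR) hdiff
    rwa [show 1 + S * ((1 + M)⁻¹ * S) + (N - S * ((1 + M)⁻¹ * S)) = 1 + N by abel] at this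
  calc (1 + M).det * (1 + (1 + M)⁻¹ * N).det
      = (1 + M).det * (1 + S * ((1 + M)⁻¹ * S)).det := by rw [h2]
    _ ≤ (1 + M).det * (1 + N).det := by
        apply mul_le_mul_of_nonneg_left h4 hPD.det_pos.le

lemma trace_nonneg_of_psd {M : Matrix (Fin n) (Fin n) ℝ} (hM : M.PosSemidef) :
    0 ≤ M.trace := by
  rw [trace_eq_sum_eig hM.1]
  exact Finset.sum_nonneg fun i _ => hM.eigenvalues_nonneg i

/-- AM-GM style bound: log det(1+M) ≤ n log (1 + trace M / n). -/
lemma log_det_one_add_le_card {M : Matrix (Fin n) (Fin n) ℝ} (hM : M.PosSemidef) :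
    Real.log (1 + M).det ≤ n * Real.log (1 + M.trace / n) := by
  rcases Nat.eq_zero_or_pos n with hn | hn
  · subst hn
    have : (1 + M).det = 1 := det_fin_zero
    simp [this]
  · have hnpos : (0:ℝ) < n := by exact_mod_cast hn
    rw [det_one_add_eq_prod hM.1, trace_eq_sum_eig hM.1]
    set z : Fin n → ℝ := fun i => 1 + hM.1.eigenvalues i with hz
    have hzpos : ∀ i, 0 < z i := fun i => by
      have := hM.eigenvalues_nonneg i; simp only [hz]; linarith
    have hgm : ∏ i, z i ^ ((n:ℝ)⁻¹) ≤ ∑ i, (n:ℝ)⁻¹ * z i := by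
      apply Real.geom_mean_le_arith_mean_weighted
      · intro i _; positivity
      · rw [Finset.sum_const]; simp; field_simp
      · intro i _; exact (hzpos i).le
    have hsum : ∑ i, (n:ℝ)⁻¹ * z i = 1 + (∑ i, hM.1.eigenvalues i) / n := by
      rw [← Finset.mul_sum]
      have hzz : ∑ i, z i = n + ∑ i, hM.1.eigenvalues i := by
        simp [hz, Finset.sum_add_distrib]
      rw [hzz]
      field_simp
    have hprodpos : 0 < ∏ i, z i ^ ((n:ℝ)⁻¹) :=
      Finset.prod_pos fun i _ => Real.rpow_pos_of_pos (hzpos i) _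
    have hlog := Real.log_le_log hprodpos (hsum ▸ hgm)
    rw [Real.log_prod (fun i _ => (Real.rpow_pos_of_pos (hzpos i) _).ne')] at hlog
    have heq : ∑ i, Real.log (z i ^ ((n:ℝ)⁻¹)) = (n:ℝ)⁻¹ * ∑ i, Real.log (z i) := by
      rw [Finset.mul_sum]
      apply Finset.sum_congr rfl
      intro i _
      rw [Real.log_rpow (hzpos i)]
    rw [heq] at hlog
    have : Real.log (∏ i, z i) = ∑ i, Real.log (z i) :=
      Real.log_prod (fun i _ => (hzpos i).ne')
    rw [this]
    calc ∑ i, Real.log (z i) = n * ((n:ℝ)⁻¹ * ∑ i, Real.log (z i)) := by field_simp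
    _ ≤ n * Real.log (1 + (∑ i, hM.1.eigenvalues i) / n) := by
        apply mul_le_mul_of_nonneg_left hlog hnpos.le

end Helpers

theorem information_gain_bound {t D : ℕ} (K K_O : Matrix (Fin t) (Fin t) ℝ)
    (A : Matrix (Fin t) (Fin D) ℝ) {kbar δ τ : ℝ}
    (hK : K.PosSemidef) (hdecomp : K = A * Aᵀ + K_O)
    (hrows : ∀ s, ∑ i, (A s i) ^ 2 ≤ kbar)
    (hO : K_O.PosSemidef) (hdiag : ∀ i, K_O i i ≤ δ) (hτ : 0 < τ) :
    (1 / 2) * Real.log ((1 + τ⁻¹ • K).det)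
      ≤ (1 / 2) * D * Real.log (1 + t * kbar / (τ * D))
        + (1 / 2) * t * δ / τ := by
  have hτi : (0:ℝ) ≤ τ⁻¹ := by positivity
  have hAAt : (A * Aᵀ).PosSemidef := by
    have := Matrix.posSemidef_self_mul_conjTranspose A
    rwa [conjTranspose_eq_transpose_of_trivial] at this
  set M := τ⁻¹ • (A * Aᵀ) with hMdef
  set N := τ⁻¹ • K_O with hNdef
  have hMpsd : M.PosSemidef := smul_posSemidef hAAt hτi
  have hNpsd : N.PosSemidef := smul_posSemidef hO hτi
  have hKMN : τ⁻¹ • K = M + N := by rw [hdecomp, smul_add]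
  have hdet1 : 0 < (1 + M).det := (Matrix.PosDef.one.add_posSemidef hMpsd).det_pos
  have hdet2 : 0 < (1 + N).det := (Matrix.PosDef.one.add_posSemidef hNpsd).det_pos
  have hsplit : Real.log ((1 + τ⁻¹ • K).det)
      ≤ Real.log (1 + M).det + Real.log (1 + N).det := by
    rw [hKMN, ← Real.log_mul hdet1.ne' hdet2.ne']
    exact Real.log_le_log (Matrix.PosDef.one.add_posSemidef (hMpsd.add hNpsd)).det_pos
      (det_one_add_add_le hMpsd hNpsd)
  -- bound for the N part
  have hKOtr : K_O.trace ≤ t * δ := by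
    rw [Matrix.trace]
    calc ∑ i, K_O.diag i ≤ ∑ _i : Fin t, δ := Finset.sum_le_sum fun i _ => hdiag i
    _ = t * δ := by simp [mul_comm]
  have hNtrace : N.trace ≤ t * δ / τ := by
    rw [hNdef, trace_smul]
    calc τ⁻¹ • K_O.trace = τ⁻¹ * K_O.trace := rfl
    _ ≤ τ⁻¹ * (t * δ) := mul_le_mul_of_nonneg_left hKOtr hτi
    _ = t * δ / τ := by field_simp
  have hNbound : Real.log (1 + N).det ≤ t * δ / τ :=
    (log_det_one_add_le_trace_s8 hNpsd).trans hNtrace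
  -- bound for the M part
  have hswap : (1 + M).det = (1 + τ⁻¹ • (Aᵀ * A)).det := by
    rw [hMdef]
    have h1 : (1 : Matrix (Fin t) (Fin t) ℝ) + τ⁻¹ • (A * Aᵀ) = 1 + (τ⁻¹ • A) * Aᵀ := by
      rw [Matrix.smul_mul]
    have h2 : (1 : Matrix (Fin D) (Fin D) ℝ) + τ⁻¹ • (Aᵀ * A) = 1 + Aᵀ * (τ⁻¹ • A) := by
      rw [Matrix.mul_smul]
    rw [h1, h2, Matrix.det_one_add_mul_comm]
  have hAtA : (Aᵀ * A).PosSemidef := by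
    have := Matrix.posSemidef_conjTranspose_mul_self A
    rwa [conjTranspose_eq_transpose_of_trivial] at this
  have hM2psd : (τ⁻¹ • (Aᵀ * A)).PosSemidef := smul_posSemidef hAtA hτi
  have htrAtA : (Aᵀ * A).trace ≤ t * kbar := by
    have he : (Aᵀ * A).trace = ∑ s, ∑ i, (A s i)^2 := by
      rw [Matrix.trace]
      simp only [Matrix.diag, Matrix.mul_apply, Matrix.transpose_apply]
      rw [Finset.sum_comm]
      exact Finset.sum_congr rfl fun s _ => Finset.sum_congr rfl fun i _ => (sq (A s i)).symm
    rw [he]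
    calc ∑ s, ∑ i, (A s i)^2 ≤ ∑ _s : Fin t, kbar := Finset.sum_le_sum fun s _ => hrows s
    _ = t * kbar := by simp [mul_comm]
  have htrA : (τ⁻¹ • (Aᵀ * A)).trace ≤ t * kbar / τ := by
    rw [trace_smul]
    calc τ⁻¹ • (Aᵀ * A).trace = τ⁻¹ * (Aᵀ * A).trace := rfl
    _ ≤ τ⁻¹ * (t * kbar) := mul_le_mul_of_nonneg_left htrAtA hτi
    _ = t * kbar / τ := by field_simp
  have hMbound : Real.log (1 + M).det ≤ D * Real.log (1 + t * kbar / (τ * D)) := by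
    rw [hswap]
    refine (log_det_one_add_le_card hM2psd).trans ?_
    rcases Nat.eq_zero_or_pos D with hD | hD
    · subst hD; simp
    · have hDpos : (0:ℝ) < D := by exact_mod_cast hD
      have htrnn : 0 ≤ (τ⁻¹ • (Aᵀ * A)).trace := trace_nonneg_of_psd hM2psd
      have hle : (τ⁻¹ • (Aᵀ * A)).trace / D ≤ t * kbar / (τ * D) := by
        rw [show t * kbar / (τ * D) = (t * kbar / τ) / D by rw [div_div]]
        exact div_le_div_of_nonneg_right htrA hDpos.le
      apply mul_le_mul_of_nonneg_left _ hDpos.le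
      apply Real.log_le_log (by positivity)
      linarith
  calc (1 / 2) * Real.log ((1 + τ⁻¹ • K).det)
      ≤ (1 / 2) * (Real.log (1 + M).det + Real.log (1 + N).det) := by linarith
    _ ≤ (1 / 2) * (↑D * Real.log (1 + ↑t * kbar / (τ * ↑D)) + ↑t * δ / τ) := by linarith
    _ = (1 / 2) * D * Real.log (1 + t * kbar / (τ * D)) + (1 / 2) * t * δ / τ := by ring
end

section
/- Suppose γ: ℕ → ℝ satisfies, for all T and all D ∈ ℕ with D ≥ 1, γ(T) ≤ (1/2) D log(1 + k̄T/(τD)) + (1/2) δ(D) T/τ, where δ(D) ≤ C ψ² D^{1−β} for constants C, ψ, k̄, τ > 0 and β > 1. Then choosing D = ⌈(Cψ²T/τ)^{1/β} · log^{−1/β}(1 + k̄T/τ)⌉ gives γ(T) ≤ ((Cψ²T/τ)^{1/β} log^{−1/β}(1 + k̄T/τ) + 1) · log(1 + k̄T/τ) for all T ≥ 1. -/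
set_option maxHeartbeats 1000000 in
theorem gamma_poly_bound (γ : ℕ → ℝ) (δ : ℕ → ℝ)
    {C ψ kbar τ β : ℝ} (hC : 0 < C) (hψ : 0 < ψ) (hk : 0 < kbar)
    (hτ : 0 < τ) (hβ : 1 < β)
    (hγ : ∀ T D : ℕ, 1 ≤ D →
      γ T ≤ (1 / 2) * D * Real.log (1 + kbar * T / (τ * D))
              + (1 / 2) * δ D * T / τ)
    (hδ : ∀ D : ℕ, 1 ≤ D → δ D ≤ C * ψ ^ 2 * (D : ℝ) ^ (1 - β)) :
    ∀ T : ℕ, 1 ≤ T →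
      γ T ≤ ((C * ψ ^ 2 * T / τ) ^ (1 / β)
                * (Real.log (1 + kbar * T / τ)) ^ (-(1 / β)) + 1)
              * Real.log (1 + kbar * T / τ) := by
  intro T hT
  have hT0 : (0:ℝ) < T := by exact_mod_cast hT
  have hβ0 : (0:ℝ) < β := lt_trans one_pos hβ
  set x : ℝ := C * ψ ^ 2 * T / τ with hxdef
  have hx : 0 < x := by
    apply div_pos _ hτ
    positivity
  set L : ℝ := Real.log (1 + kbar * T / τ) with hLdef
  have hL : 0 < L := Real.log_pos (by
    have : 0 < kbar * T / τ := div_pos (mul_pos hk hT0) hτ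
    linarith)
  set A : ℝ := x ^ (1/β : ℝ) with hAdef
  have hA : 0 < A := Real.rpow_pos_of_pos hx _
  set x0 : ℝ := A * L ^ (-(1/β) : ℝ) with hx0def
  have hx0 : 0 < x0 := mul_pos hA (Real.rpow_pos_of_pos hL _)
  set D : ℕ := ⌈x0⌉₊ with hDdef
  have hD1 : 1 ≤ D := Nat.ceil_pos.mpr hx0
  have hD1' : (1:ℝ) ≤ (D:ℝ) := by exact_mod_cast hD1
  have hDpos : (0:ℝ) < (D:ℝ) := lt_of_lt_of_le one_pos hD1'
  have hDge : x0 ≤ (D:ℝ) := Nat.le_ceil _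
  have hDle : (D:ℝ) ≤ x0 + 1 := (Nat.ceil_lt_add_one hx0.le).le
  have key := hγ T D hD1
  -- term 1
  have hlog1 : Real.log (1 + kbar * T / (τ * D)) ≤ L := by
    apply Real.log_le_log (by positivity)
    have h1 : kbar * T / (τ * D) ≤ kbar * T / τ := by
      apply div_le_div_of_nonneg_left (by positivity) hτ
      nlinarith
    linarith
  have ht1 : (1/2) * (D:ℝ) * Real.log (1 + kbar * T / (τ * D)) ≤ (1/2) * D * L := by
    have := mul_le_mul_of_nonneg_left hlog1 (by positivity : (0:ℝ) ≤ (1/2) * D)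
    linarith [this]
  -- term 2
  have hδD := hδ D hD1
  have hpow : (D:ℝ) ^ (1 - β) ≤ x0 ^ (1 - β) :=
    Real.rpow_le_rpow_of_nonpos hx0 hDge (by linarith)
  have heq : x * x0 ^ (1 - β) = x0 * L := by
    have e1 : x0 ^ (1 - β) = x ^ ((1/β) * (1 - β)) * L ^ ((-(1/β)) * (1 - β)) := by
      rw [hx0def, hAdef, Real.mul_rpow (by positivity) (by positivity),
        ← Real.rpow_mul hx.le, ← Real.rpow_mul hL.le]
    have e2 : x * x ^ ((1/β) * (1 - β)) = x ^ ((1:ℝ) + (1/β) * (1 - β)) := by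
      rw [Real.rpow_add hx, Real.rpow_one]
    have e3 : (1:ℝ) + (1/β) * (1 - β) = 1/β := by field_simp; ring
    have e4 : (-(1/β)) * (1 - β) = -(1/β) + 1 := by field_simp; ring
    have e5 : L ^ ((-(1/β)) * (1 - β)) = L ^ (-(1/β) : ℝ) * L := by
      rw [e4, Real.rpow_add hL, Real.rpow_one]
    calc x * x0 ^ (1 - β)
        = x * (x ^ ((1/β) * (1 - β)) * L ^ ((-(1/β)) * (1 - β))) := by rw [e1]
      _ = (x * x ^ ((1/β) * (1 - β))) * L ^ ((-(1/β)) * (1 - β)) := by ring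
      _ = x ^ (1/β : ℝ) * (L ^ (-(1/β) : ℝ) * L) := by rw [e2, e3, e5]
      _ = x0 * L := by rw [hx0def, hAdef]; ring
  have ht2 : (1/2) * δ D * T / τ ≤ (1/2) * (x0 * L) := by
    have h1 : δ D ≤ C * ψ ^ 2 * x0 ^ (1 - β) := by
      calc δ D ≤ C * ψ ^ 2 * (D:ℝ) ^ (1 - β) := hδD
        _ ≤ C * ψ ^ 2 * x0 ^ (1 - β) := by
            apply mul_le_mul_of_nonneg_left hpow (by positivity)
    have h2 : (1/2) * δ D * T / τ ≤ (1/2) * (C * ψ ^ 2 * x0 ^ (1 - β)) * T / τ := by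
      apply (div_le_div_iff_of_pos_right hτ).mpr
      nlinarith
    have h3 : (1/2) * (C * ψ ^ 2 * x0 ^ (1 - β)) * T / τ = (1/2) * (x * x0 ^ (1 - β)) := by
      rw [hxdef]; ring
    rw [heq] at h3
    linarith
  -- combine
  have hfin : γ T ≤ (1/2) * D * L + (1/2) * (x0 * L) := by linarith
  have hgoal : (1/2) * (D:ℝ) * L + (1/2) * (x0 * L) ≤ (x0 + 1) * L := by
    nlinarith [mul_le_mul_of_nonneg_right hDle hL.le]
  calc γ T ≤ (1/2) * D * L + (1/2) * (x0 * L) := hfin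
    _ ≤ (x0 + 1) * L := hgoal
    _ = (x ^ (1/β : ℝ) * L ^ (-(1/β) : ℝ) + 1) * L := by rw [hx0def, hAdef]
end

section
/- Suppose for each T ≥ 1 and each D ≥ 1 we have γ(T) ≤ (1/2) D log(1 + k̄T/(τD)) + (1/2)(C₁/C₂) exp(−C₂ D) ψ² T/τ, for constants k̄, τ, C₁, C₂, ψ > 0. Then choosing D = ⌈(1/C₂) log(C₁ψ²T/(τC₂))⌉ yields γ(T) ≤ ((1/C₂)(log T + log(C₁ψ²/(τC₂))) + 1) · log(1 + k̄T/τ) for all sufficiently large T. -/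
set_option maxHeartbeats 1000000
theorem gamma_exp_bound (γ : ℕ → ℝ)
    {kbar τ C₁ C₂ ψ : ℝ} (hk : 0 < kbar) (hτ : 0 < τ)
    (hC₁ : 0 < C₁) (hC₂ : 0 < C₂) (hψ : 0 < ψ)
    (hγ : ∀ T D : ℕ, 1 ≤ T → 1 ≤ D →
      γ T ≤ (1 / 2) * D * Real.log (1 + kbar * T / (τ * D))
              + (1 / 2) * (C₁ / C₂) * Real.exp (-C₂ * D) * ψ ^ 2 * T / τ) :
    ∃ T₀ : ℕ, ∀ T : ℕ, T₀ ≤ T →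
      γ T ≤ ((1 / C₂) * (Real.log T + Real.log (C₁ * ψ ^ 2 / (τ * C₂))) + 1)
              * Real.log (1 + kbar * T / τ) := by
  set c : ℝ := C₁ * ψ ^ 2 / (τ * C₂) with hcdef
  have hc : 0 < c := by positivity
  refine ⟨⌈max (Real.exp 1 / c) (τ * Real.exp 1 / kbar)⌉₊ + 1, fun T hT => ?_⟩
  have hT1 : 1 ≤ T := le_trans (Nat.le_add_left 1 _) hT
  have hTpos : (0:ℝ) < T := by exact_mod_cast hT1
  have hTR : (⌈max (Real.exp 1 / c) (τ * Real.exp 1 / kbar)⌉₊ : ℝ) ≤ T := by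
    have : (⌈max (Real.exp 1 / c) (τ * Real.exp 1 / kbar)⌉₊ : ℕ) ≤ T :=
      le_trans (Nat.le_succ _) hT
    exact_mod_cast this
  have hmax : max (Real.exp 1 / c) (τ * Real.exp 1 / kbar) ≤ T :=
    le_trans (Nat.le_ceil _) hTR
  have h1 : Real.exp 1 ≤ c * T := by
    have := le_trans (le_max_left _ _) hmax
    rw [div_le_iff₀ hc] at this
    linarith [this]
  have h2 : Real.exp 1 ≤ 1 + kbar * T / τ := by
    have := le_trans (le_max_right _ _) hmax
    rw [div_le_iff₀ hk] at this
    have : Real.exp 1 ≤ kbar * T / τ := by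
      rw [le_div_iff₀ hτ]; linarith
    linarith
  set x : ℝ := (1 / C₂) * Real.log (c * T) with hx
  have hlogcT : 1 ≤ Real.log (c * T) := by
    have := Real.log_le_log (Real.exp_pos 1) h1
    rwa [Real.log_exp] at this
  have hxpos : 0 < x := by
    have h1C : 0 < 1 / C₂ := by positivity
    nlinarith
  set D : ℕ := ⌈x⌉₊ with hD
  have hD1 : 1 ≤ D := Nat.ceil_pos.mpr hxpos
  have hDx : x ≤ (D:ℝ) := Nat.le_ceil x
  have hDx1 : (D:ℝ) ≤ x + 1 := (Nat.ceil_lt_add_one hxpos.le).le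
  have hDpos : (0:ℝ) < D := by exact_mod_cast hD1
  have hγT := hγ T D hT1 hD1
  -- second term
  have hexp : Real.exp (-C₂ * D) ≤ 1 / (c * T) := by
    have hmono : Real.exp (-C₂ * D) ≤ Real.exp (-C₂ * x) :=
      Real.exp_le_exp.mpr (by nlinarith)
    have heq : -C₂ * x = -Real.log (c * T) := by
      rw [hx]; field_simp
    rw [heq, Real.exp_neg, Real.exp_log (by positivity)] at hmono
    rw [one_div]; exact hmono
  have hsec : (1 / 2) * (C₁ / C₂) * Real.exp (-C₂ * D) * ψ ^ 2 * T / τ ≤ 1 / 2 := by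
    have step : (1 / 2) * (C₁ / C₂) * Real.exp (-C₂ * D) * ψ ^ 2 * T / τ
        ≤ (1 / 2) * (C₁ / C₂) * (1 / (c * T)) * ψ ^ 2 * T / τ := by
      gcongr
    refine le_trans step (le_of_eq ?_)
    rw [hcdef]
    field_simp
  -- logs
  have hLpos : 0 < 1 + kbar * T / τ := by positivity
  have hL1 : 1 ≤ Real.log (1 + kbar * T / τ) := by
    have := Real.log_le_log (Real.exp_pos 1) h2
    rwa [Real.log_exp] at this
  have hlog_mono : Real.log (1 + kbar * T / (τ * D)) ≤ Real.log (1 + kbar * T / τ) := by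
    apply Real.log_le_log (by positivity)
    have : kbar * T / (τ * D) ≤ kbar * T / τ := by
      apply div_le_div_of_nonneg_left (by positivity) hτ
      have hD1R : (1:ℝ) ≤ (D:ℝ) := by exact_mod_cast hD1
      nlinarith
    linarith
  have hfirst : (1 / 2) * D * Real.log (1 + kbar * T / (τ * D))
      ≤ (1 / 2) * (x + 1) * Real.log (1 + kbar * T / τ) := by
    have step1 : (1 / 2) * D * Real.log (1 + kbar * T / (τ * D))
        ≤ (1 / 2) * D * Real.log (1 + kbar * T / τ) := by
      apply mul_le_mul_of_nonneg_left hlog_mono (by positivity)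
    have step2 : (1 / 2) * (D:ℝ) * Real.log (1 + kbar * T / τ)
        ≤ (1 / 2) * (x + 1) * Real.log (1 + kbar * T / τ) := by
      apply mul_le_mul_of_nonneg_right _ (by linarith)
      linarith
    linarith
  have hA : x + 1 = (1 / C₂) * (Real.log T + Real.log c) + 1 := by
    rw [hx, Real.log_mul hc.ne' hTpos.ne']; ring
  have hfinal : γ T ≤ (1 / 2) * (x + 1) * Real.log (1 + kbar * T / τ) + 1 / 2 := by
    linarith
  rw [← hA]
  have hmul : (x + 1) * 1 ≤ (x + 1) * Real.log (1 + kbar * T / τ) :=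
    mul_le_mul_of_nonneg_left hL1 (by linarith)
  linarith
end
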